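/- Let N ≥ 1 and let C be an N×N real matrix such that the permutation matrix P* minimizing ⟨C, P⟩_F over all N×N permutation matrices is unique. For each β > 0, let B̂_β be the unique minimizer of S_{β,C}(B) := ⟨C, B⟩_F − (1/β)·H(B) over the set of N×N doubly stochastic matrices. Then B̂_β converges entrywise to P* as β → ∞. -/
import Mathlib


open Filter Topology

/-- An `N × N` real matrix is doubly stochastic if all its entries are non-negative
and every row sum and every column sum equals 1. -/
def IsDoublyStochastic {N : ℕ} (B : Matrix (Fin N) (Fin N) ℝ) : Prop :=
  (∀ i j, 0 ≤ B i j) ∧ (∀ i, ∑ j, B i j = 1) ∧ (∀ j, ∑ i, B i j = 1)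

/-- The Frobenius inner product `⟨X, Y⟩_F = Σ_{ij} X_{ij} Y_{ij}`. -/
def frob {N : ℕ} (X Y : Matrix (Fin N) (Fin N) ℝ) : ℝ :=
  ∑ i, ∑ j, X i j * Y i j

/-- The entropy `H(B) = -Σ_{ij} B_{ij} log B_{ij}` (with `0 log 0 = 0`, which is
automatic since `Real.log 0 = 0`). -/
noncomputable def entH {N : ℕ} (B : Matrix (Fin N) (Fin N) ℝ) : ℝ :=
  -∑ i, ∑ j, B i j * Real.log (B i j)

/-- The entropy-regularized objective `S_{β,C}(B) = ⟨C, B⟩_F - (1/β) H(B)`. -/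
noncomputable def Sobj {N : ℕ} (β : ℝ) (C B : Matrix (Fin N) (Fin N) ℝ) : ℝ :=
  frob C B - (1 / β) * entH B

/-- The permutation matrix of `σ`: `P_{ij} = 1` if `j = σ i`, else `0`. -/
def permMat {N : ℕ} (σ : Equiv.Perm (Fin N)) : Matrix (Fin N) (Fin N) ℝ :=
  Matrix.of fun i j => if σ i = j then 1 else 0

/-- A matrix is a permutation matrix if it arises from some permutation. -/
def IsPermMatrix {N : ℕ} (P : Matrix (Fin N) (Fin N) ℝ) : Prop :=
  ∃ σ : Equiv.Perm (Fin N), P = permMat σ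

lemma permMat_eq_permMatrix {N : ℕ} (σ : Equiv.Perm (Fin N)) :
    permMat σ = σ.permMatrix ℝ := by
  ext i j
  simp [permMat, Equiv.Perm.permMatrix, PEquiv.toMatrix_apply, Equiv.toPEquiv_apply, eq_comm]

lemma isDS_iff {N : ℕ} (B : Matrix (Fin N) (Fin N) ℝ) :
    IsDoublyStochastic B ↔ B ∈ doublyStochastic ℝ (Fin N) := by
  rw [mem_doublyStochastic_iff_sum]; rfl

noncomputable def frobL {N : ℕ} (C : Matrix (Fin N) (Fin N) ℝ) :
    Matrix (Fin N) (Fin N) ℝ →ₗ[ℝ] ℝ where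
  toFun B := frob C B
  map_add' A B := by
    simp [frob, mul_add, Finset.sum_add_distrib]
  map_smul' a B := by
    simp only [frob, Matrix.smul_apply, smul_eq_mul, RingHom.id_apply, Finset.mul_sum]
    exact Finset.sum_congr rfl fun i _ => Finset.sum_congr rfl fun j _ => by ring

lemma frob_sum_smul {N : ℕ} (C : Matrix (Fin N) (Fin N) ℝ) {ι : Type*} (s : Finset ι)
    (w : ι → ℝ) (M : ι → Matrix (Fin N) (Fin N) ℝ) :
    frob C (∑ σ ∈ s, w σ • M σ) = ∑ σ ∈ s, w σ * frob C (M σ) := by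
  have : frob C (∑ σ ∈ s, w σ • M σ) = frobL C (∑ σ ∈ s, w σ • M σ) := rfl
  rw [this, map_sum]
  exact Finset.sum_congr rfl fun σ _ => by rw [map_smul]; rfl

lemma permMat_isDS {N : ℕ} (σ : Equiv.Perm (Fin N)) : IsDoublyStochastic (permMat σ) := by
  rw [isDS_iff, permMat_eq_permMatrix]
  exact permMatrix_mem_doublyStochastic

lemma permMat_inj {N : ℕ} {σ τ : Equiv.Perm (Fin N)} (h : permMat σ = permMat τ) : σ = τ := by
  apply Equiv.ext
  intro i
  have := congrFun (congrFun h i) (σ i)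
  simp only [permMat, Matrix.of_apply] at this
  rw [if_true] at this
  by_contra hne
  rw [if_neg (fun hh => hne hh.symm)] at this
  exact one_ne_zero this

lemma entH_le {N : ℕ} (B : Matrix (Fin N) (Fin N) ℝ) (hB : IsDoublyStochastic B) :
    entH B ≤ (N : ℝ)^2 := by
  have key : ∀ i j, -(B i j * Real.log (B i j)) ≤ 1 := by
    intro i j
    rcases eq_or_lt_of_le (hB.1 i j) with h | h
    · simp [← h]
    · have hlog : Real.log (1 / B i j) ≤ 1 / B i j - 1 :=
        Real.log_le_sub_one_of_pos (by positivity)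
      rw [Real.log_div one_ne_zero h.ne', Real.log_one, zero_sub] at hlog
      have h2 := mul_le_mul_of_nonneg_left hlog h.le
      have h3 : B i j * (1 / B i j) = 1 := by field_simp
      nlinarith
  have : entH B = ∑ i, ∑ j, -(B i j * Real.log (B i j)) := by
    simp [entH, Finset.sum_neg_distrib]
  rw [this]
  calc ∑ i, ∑ j, -(B i j * Real.log (B i j)) ≤ ∑ _i : Fin N, ∑ _j : Fin N, (1:ℝ) :=
        Finset.sum_le_sum fun i _ => Finset.sum_le_sum fun j _ => key i j
    _ = (N:ℝ)^2 := by simp [sq]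

lemma entH_permMat {N : ℕ} (σ : Equiv.Perm (Fin N)) : entH (permMat σ) = 0 := by
  have : ∀ i j, permMat σ i j * Real.log (permMat σ i j) = 0 := by
    intro i j
    simp only [permMat, Matrix.of_apply]
    split <;> simp
  simp [entH, this]

lemma gap_bound {N : ℕ} (C Pstar : Matrix (Fin N) (Fin N) ℝ) (τ : Equiv.Perm (Fin N))
    (hP : Pstar = permMat τ)
    (huniq : ∀ σ : Equiv.Perm (Fin N), permMat σ ≠ Pstar → frob C Pstar < frob C (permMat σ)) :
    ∃ δ : ℝ, 0 < δ ∧ ∀ B, IsDoublyStochastic B → ∀ i j,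
      |B i j - Pstar i j| * δ ≤ frob C B - frob C Pstar := by
  classical
  set s : Finset (Equiv.Perm (Fin N)) := Finset.univ.erase τ with hs_def
  set g : Equiv.Perm (Fin N) → ℝ := fun σ => frob C (permMat σ) - frob C Pstar with hg_def
  -- common decomposition facts
  have decomp : ∀ B, IsDoublyStochastic B → ∃ w : Equiv.Perm (Fin N) → ℝ,
      (∀ σ, 0 ≤ w σ) ∧ ∑ σ, w σ = 1 ∧ B = ∑ σ, w σ • permMat σ := by
    intro B hB
    obtain ⟨w, hw0, hw1, hwB⟩ := exists_eq_sum_perm_of_mem_doublyStochastic ((isDS_iff B).1 hB)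
    refine ⟨w, hw0, hw1, ?_⟩
    rw [← hwB]
    refine Finset.sum_congr rfl fun σ _ => ?_
    rw [permMat_eq_permMatrix]
  by_cases hs : s.Nonempty
  · -- nondegenerate case
    have hsimg : (s.image g).Nonempty := hs.image g
    set δ : ℝ := (s.image g).min' hsimg with hδ_def
    have hδpos : 0 < δ := by
      obtain ⟨σ, hσs, hσ⟩ := Finset.mem_image.1 ((s.image g).min'_mem hsimg)
      rw [hδ_def, ← hσ]
      have hne : permMat σ ≠ Pstar := by
        rw [hP]; intro hh; exact (Finset.mem_erase.1 hσs).1 (permMat_inj hh)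
      have := huniq σ hne
      simp only [hg_def]; linarith
    have hδle : ∀ σ ∈ s, δ ≤ g σ := fun σ hσ =>
      Finset.min'_le _ _ (Finset.mem_image_of_mem g hσ)
    refine ⟨δ, hδpos, fun B hB i j => ?_⟩
    obtain ⟨w, hw0, hw1, hwB⟩ := decomp B hB
    have hgτ : g τ = 0 := by simp [hg_def, hP]
    have hPτ : Pstar = permMat τ := hP
    -- frob identity
    have hf : frob C B - frob C Pstar = ∑ σ ∈ s, w σ * g σ := by
      rw [hwB, frob_sum_smul]
      have h1 : frob C Pstar = ∑ σ : Equiv.Perm (Fin N), w σ * frob C Pstar := by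
        rw [← Finset.sum_mul, hw1, one_mul]
      rw [h1, ← Finset.sum_sub_distrib]
      have h2 : ∀ σ : Equiv.Perm (Fin N),
          w σ * frob C (permMat σ) - w σ * frob C Pstar = w σ * g σ := by
        intro σ; simp [hg_def]; ring
      simp_rw [h2]
      rw [← Finset.add_sum_erase _ _ (Finset.mem_univ τ), hgτ, mul_zero, zero_add]
    -- entrywise bound
    have h3 : |B i j - Pstar i j| ≤ ∑ σ ∈ s, w σ := by
      have hBij : B i j - Pstar i j = ∑ σ ∈ s, w σ * (permMat σ i j - Pstar i j) := by
        have e1 : B i j = ∑ σ : Equiv.Perm (Fin N), w σ * permMat σ i j := by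
          rw [hwB]; simp [Matrix.sum_apply]
        have e2 : Pstar i j = ∑ σ : Equiv.Perm (Fin N), w σ * Pstar i j := by
          rw [← Finset.sum_mul, hw1, one_mul]
        conv_lhs => rw [e1, e2]
        rw [← Finset.sum_sub_distrib]
        have h2 : ∀ σ : Equiv.Perm (Fin N),
            w σ * permMat σ i j - w σ * Pstar i j = w σ * (permMat σ i j - Pstar i j) := by
          intro σ; ring
        simp_rw [h2]
        rw [← Finset.add_sum_erase _ _ (Finset.mem_univ τ), ← hPτ, sub_self, mul_zero, zero_add]
      rw [hBij]
      calc |∑ σ ∈ s, w σ * (permMat σ i j - Pstar i j)|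
          ≤ ∑ σ ∈ s, |w σ * (permMat σ i j - Pstar i j)| := Finset.abs_sum_le_sum_abs _ _
        _ ≤ ∑ σ ∈ s, w σ := by
            refine Finset.sum_le_sum fun σ hσ => ?_
            rw [abs_mul, abs_of_nonneg (hw0 σ)]
            have hb : |permMat σ i j - Pstar i j| ≤ 1 := by
              rw [hPτ]
              simp only [permMat, Matrix.of_apply]
              split <;> split <;> norm_num
            nlinarith [hw0 σ]
    have h2 : δ * ∑ σ ∈ s, w σ ≤ ∑ σ ∈ s, w σ * g σ := by
      rw [Finset.mul_sum]
      refine Finset.sum_le_sum fun σ hσ => ?_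
      rw [mul_comm δ (w σ)]
      exact mul_le_mul_of_nonneg_left (hδle σ hσ) (hw0 σ)
    calc |B i j - Pstar i j| * δ ≤ (∑ σ ∈ s, w σ) * δ :=
          mul_le_mul_of_nonneg_right h3 hδpos.le
      _ = δ * ∑ σ ∈ s, w σ := mul_comm _ _
      _ ≤ ∑ σ ∈ s, w σ * g σ := h2
      _ = frob C B - frob C Pstar := hf.symm
  · -- degenerate case: τ is the only permutation
    refine ⟨1, one_pos, fun B hB i j => ?_⟩
    have huniv : (Finset.univ : Finset (Equiv.Perm (Fin N))) = {τ} := by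
      rw [Finset.not_nonempty_iff_eq_empty, hs_def, Finset.erase_eq_empty_iff] at hs
      rcases hs with h | h
      · exact absurd h (Finset.univ_nonempty.ne_empty)
      · exact h
    obtain ⟨w, hw0, hw1, hwB⟩ := decomp B hB
    rw [huniv, Finset.sum_singleton] at hw1
    have hBP : B = Pstar := by
      rw [hwB, huniv, Finset.sum_singleton, hw1, one_smul, hP]
    rw [hBP]
    simp

/-- Cold-limit claim after Theorem 2 of the paper: if the permutation matrix `P*`
minimizing `⟨C, P⟩_F` is unique and `B̂_β` minimizes the entropy-regularized
objective `S_{β,C}` over doubly stochastic matrices, then `B̂_β → P*` entrywise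
as `β → ∞`. -/
theorem sobj_minimizer_tendsto_unique_perm (N : ℕ) (hN : 1 ≤ N)
    (C : Matrix (Fin N) (Fin N) ℝ)
    (Pstar : Matrix (Fin N) (Fin N) ℝ) (hPstar : IsPermMatrix Pstar)
    (huniq : ∀ P : Matrix (Fin N) (Fin N) ℝ, IsPermMatrix P → P ≠ Pstar →
      frob C Pstar < frob C P)
    (Bh : ℝ → Matrix (Fin N) (Fin N) ℝ)
    (hBh : ∀ β : ℝ, 0 < β → IsDoublyStochastic (Bh β) ∧
      ∀ B : Matrix (Fin N) (Fin N) ℝ, IsDoublyStochastic B →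
        Sobj β C (Bh β) ≤ Sobj β C B) :
    ∀ i j, Tendsto (fun β => Bh β i j) atTop (𝓝 (Pstar i j)) := by
  intro i j
  obtain ⟨τ, hP⟩ := hPstar
  have huniq' : ∀ σ : Equiv.Perm (Fin N), permMat σ ≠ Pstar → frob C Pstar < frob C (permMat σ) :=
    fun σ h => huniq _ ⟨σ, rfl⟩ h
  obtain ⟨δ, hδpos, hgap⟩ := gap_bound C Pstar τ hP huniq'
  have hPds : IsDoublyStochastic Pstar := hP ▸ permMat_isDS τ
  have hent0 : entH Pstar = 0 := hP ▸ entH_permMat τ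
  set K : ℝ := (N:ℝ)^2 / δ with hK
  have keybd : ∀ β : ℝ, 0 < β → |Bh β i j - Pstar i j| ≤ K / β := by
    intro β hβ
    obtain ⟨hds, hmin⟩ := hBh β hβ
    have h1 := hmin Pstar hPds
    have hentB : entH (Bh β) ≤ (N:ℝ)^2 := entH_le _ hds
    have hβ' : (0:ℝ) < 1/β := by positivity
    have h2 : frob C (Bh β) - frob C Pstar ≤ (1/β) * (N:ℝ)^2 := by
      unfold Sobj at h1
      rw [hent0, mul_zero, sub_zero] at h1
      nlinarith [hβ'.le]
    have h3 := hgap (Bh β) hds i j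
    rw [le_div_iff₀ hβ, hK, le_div_iff₀ hδpos]
    have h4 : |Bh β i j - Pstar i j| * δ * β ≤ (1/β) * (N:ℝ)^2 * β :=
      mul_le_mul_of_nonneg_right (h3.trans h2) hβ.le
    have hb1 : (1/β) * (N:ℝ)^2 * β = (N:ℝ)^2 := by field_simp
    rw [hb1] at h4
    calc |Bh β i j - Pstar i j| * β * δ
        = |Bh β i j - Pstar i j| * δ * β := by ring
      _ ≤ (N:ℝ)^2 := h4
  rw [tendsto_iff_dist_tendsto_zero]
  simp only [Real.dist_eq]
  have hg : Tendsto (fun β : ℝ => K / β) atTop (𝓝 0) :=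
    tendsto_const_nhds.div_atTop tendsto_id
  refine squeeze_zero' ?_ ?_ hg
  · exact Filter.Eventually.of_forall fun β => abs_nonneg _
  · exact (eventually_gt_atTop 0).mono fun β hβ => keybd β hβ
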